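/- Let ψ be a divergence, A ⊆ D, and let κ be a regular conditional distribution of f(X) given X_{D∖A} (the conditional distribution kernel). Let g : ℝ^{|D∖A|} → ℝ be Borel measurable and suppose that for (P ∘ X_{D∖A}^{-1})-almost every x, ∫ ψ(y, g(x)) κ(x, dy) ≤ ∫ ψ(y, θ) κ(x, dy) for every θ ∈ ℝ. Assume all expectations below are finite. Then E[ψ(f(X), g(X_{D∖A}))] ≤ E[ψ(f(X), f(X^{∖A}))]; that is, the contrast-based index τ̃(A) is bounded above by the divergence-based index τ(A). -/

import Mathlib

open MeasureTheory ProbabilityTheory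

/-- The σ-algebra `σ(X_{D∖A})` generated by the subvector of `X` indexed by `D ∖ A`. -/
def sigmaRestrict {Ω : Type*} {d : ℕ} (X : Ω → Fin d → ℝ) (A : Finset (Fin d)) :
    MeasurableSpace Ω :=
  MeasurableSpace.comap (fun ω => (fun i : {i : Fin d // i ∈ Aᶜ} => X ω i)) inferInstance

/-- If `ψ` is a divergence, `κ` is a regular conditional distribution of `f(X)` given
`X_{D∖A}`, and `g(x)` minimizes `θ ↦ ∫ ψ(y, θ) κ(x, dy)` for almost every `x`, then
the contrast-based index is bounded by the divergence-based one:
`E[ψ(f(X), g(X_{D∖A}))] ≤ E[ψ(f(X), f(X^{∖A}))]`. -/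
theorem stmt5
    {Ω : Type*} [MeasurableSpace Ω] (μ : Measure Ω) [IsProbabilityMeasure μ]
    {d : ℕ} (X : Ω → Fin d → ℝ) (hX : Measurable X)
    (f : (Fin d → ℝ) → ℝ) (hf : Measurable f)
    (ψ : ℝ → ℝ → ℝ) (hψm : Measurable fun q : ℝ × ℝ => ψ q.1 q.2)
    (hψ0 : ∀ x y : ℝ, 0 ≤ ψ x y) (hψeq : ∀ x y : ℝ, ψ x y = 0 ↔ x = y)
    (A : Finset (Fin d)) (X' : Ω → (Fin d → ℝ)) (hX' : Measurable X')
    -- (a) `X` and `X'` are conditionally i.i.d. given `σ(X_{D∖A})`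
    (hiid : ∀ (φ φ' : (Fin d → ℝ) → ℝ),
      Measurable φ → Measurable φ' →
      (∃ C, ∀ x, |φ x| ≤ C) → (∃ C, ∀ x, |φ' x| ≤ C) →
      μ[(fun ω => φ (X ω) * φ' (X' ω)) | sigmaRestrict X A]
        =ᵐ[μ] fun ω => (μ[(fun ω => φ (X ω)) | sigmaRestrict X A]) ω *
                        (μ[(fun ω => φ' (X ω)) | sigmaRestrict X A]) ω)
    -- (b) `X'` agrees with `X` on the coordinates outside `A`, almost surely
    (hfix : ∀ᵐ ω ∂μ, ∀ i ∉ A, X' ω i = X ω i)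
    -- `κ` is a regular conditional distribution of `f(X)` given `X_{D∖A}`
    (κ : Kernel ({i : Fin d // i ∈ Aᶜ} → ℝ) ℝ) [IsMarkovKernel κ]
    (hκ : ∀ (T : Set ({i : Fin d // i ∈ Aᶜ} → ℝ)), MeasurableSet T →
      ∀ (S : Set ℝ), MeasurableSet S →
      μ ((fun ω => (fun i : {i : Fin d // i ∈ Aᶜ} => X ω i)) ⁻¹' T ∩
          (fun ω => f (X ω)) ⁻¹' S)
        = ∫⁻ x in T, κ x S ∂(μ.map (fun ω => (fun i : {i : Fin d // i ∈ Aᶜ} => X ω i))))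
    -- `g(x)` minimizes `θ ↦ ∫ ψ(y, θ) κ(x, dy)` for almost every `x`
    (g : ({i : Fin d // i ∈ Aᶜ} → ℝ) → ℝ) (hg : Measurable g)
    (hmin : ∀ᵐ x ∂(μ.map (fun ω => (fun i : {i : Fin d // i ∈ Aᶜ} => X ω i))),
      ∀ θ : ℝ, ∫ y, ψ y (g x) ∂(κ x) ≤ ∫ y, ψ y θ ∂(κ x))
    -- all expectations are assumed finite
    (hint1 : Integrable (fun ω => ψ (f (X ω)) (g (fun i : {i : Fin d // i ∈ Aᶜ} => X ω i))) μ)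
    (hint2 : Integrable (fun ω => ψ (f (X ω)) (f (X' ω))) μ)
    (hint3 : ∀ᵐ x ∂(μ.map (fun ω => (fun i : {i : Fin d // i ∈ Aᶜ} => X ω i))),
      ∀ θ : ℝ, Integrable (fun y => ψ y θ) (κ x)) :
    ∫ ω, ψ (f (X ω)) (g (fun i : {i : Fin d // i ∈ Aᶜ} => X ω i)) ∂μ
      ≤ ∫ ω, ψ (f (X ω)) (f (X' ω)) ∂μ := by
  classical
  set Z : Ω → ({i : Fin d // i ∈ Aᶜ} → ℝ) :=
    fun ω => (fun i : {i : Fin d // i ∈ Aᶜ} => X ω i) with hZdef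
  have hZ : Measurable Z :=
    measurable_pi_lambda _ fun i => (measurable_pi_apply (i : Fin d)).comp hX
  set ν : Measure ({i : Fin d // i ∈ Aᶜ} → ℝ) := μ.map Z with hν
  haveI : IsProbabilityMeasure ν := Measure.isProbabilityMeasure_map hZ.aemeasurable
  have hσ : sigmaRestrict X A ≤ ‹MeasurableSpace Ω› := hZ.comap_le
  haveI : SigmaFinite (μ.trim hσ) := inferInstance
  have hfX : Measurable fun ω => f (X ω) := hf.comp hX
  have hfX' : Measurable fun ω => f (X' ω) := hf.comp hX'
  -- Step L1 : joint law of (Z, f∘X)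
  have hpairm : Measurable fun ω => (Z ω, f (X ω)) := hZ.prodMk hfX
  haveI : IsProbabilityMeasure (μ.map fun ω => (Z ω, f (X ω))) :=
    Measure.isProbabilityMeasure_map hpairm.aemeasurable
  have hL1 : μ.map (fun ω => (Z ω, f (X ω))) = ν.compProd κ := by
    refine ext_of_generate_finite _ generateFrom_prod.symm isPiSystem_prod ?_ ?_
    · rintro _ ⟨T, hT, S, hS, rfl⟩
      have hT' : MeasurableSet T := hT
      have hS' : MeasurableSet S := hS
      rw [Measure.map_apply hpairm (hT'.prod hS'), Measure.compProd_apply_prod hT' hS']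
      exact hκ T hT' S hS'
    · simp
  -- Step L2 : conditional expectation of indicators via κ
  have hcond : ∀ S : Set ℝ, MeasurableSet S →
      (fun ω => (κ (Z ω) S).toReal) =ᵐ[μ]
        μ[(fun ω => Set.indicator S (fun _ => (1:ℝ)) (f (X ω))) | sigmaRestrict X A] := by
    intro S hS
    have hrw : (fun ω => Set.indicator S (fun _ => (1:ℝ)) (f (X ω)))
        = Set.indicator ((fun ω => f (X ω)) ⁻¹' S) (fun _ => (1:ℝ)) := by
      funext ω; simp [Set.indicator_apply]
    have hind : Integrable (fun ω => Set.indicator S (fun _ => (1:ℝ)) (f (X ω))) μ := by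
      rw [hrw]
      exact (integrable_const (1:ℝ)).indicator (hfX hS)
    have hgm : Measurable fun ω => (κ (Z ω) S).toReal :=
      ((κ.measurable_coe hS).comp hZ).ennreal_toReal
    have hbd : ∀ ω, ‖(κ (Z ω) S).toReal‖ ≤ 1 := by
      intro ω
      rw [Real.norm_eq_abs, abs_of_nonneg ENNReal.toReal_nonneg]
      have h1 := (ENNReal.toReal_le_toReal (measure_ne_top _ _) ENNReal.one_ne_top).mpr
        (prob_le_one (μ := κ (Z ω)) (s := S))
      simpa using h1
    have hgint : Integrable (fun ω => (κ (Z ω) S).toReal) μ :=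
      Integrable.mono' (integrable_const (1:ℝ)) hgm.aestronglyMeasurable
        (Filter.Eventually.of_forall hbd)
    refine ae_eq_condExp_of_forall_setIntegral_eq hσ hind
      (fun s _ _ => hgint.integrableOn) ?_ ?_
    · rintro _ ⟨T, hT, rfl⟩ -
      have h1 : ∫ ω in Z ⁻¹' T, (κ (Z ω) S).toReal ∂μ
          = ∫ x in T, (κ x S).toReal ∂ν := by
        rw [hν, setIntegral_map hT (κ.measurable_coe hS).ennreal_toReal.aestronglyMeasurable
          hZ.aemeasurable]
      have h2 : ∫ x in T, (κ x S).toReal ∂ν = (∫⁻ x in T, κ x S ∂ν).toReal :=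
        integral_toReal ((κ.measurable_coe hS).aemeasurable)
          (Filter.Eventually.of_forall fun x => measure_lt_top _ _)
      have h3 : ∫ ω in Z ⁻¹' T, Set.indicator S (fun _ => (1:ℝ)) (f (X ω)) ∂μ
          = (μ (Z ⁻¹' T ∩ (fun ω => f (X ω)) ⁻¹' S)).toReal := by
        simp only [hrw]
        rw [setIntegral_indicator (hfX hS), setIntegral_const, smul_eq_mul, mul_one, measureReal_def]
      rw [h1, h2, h3, hκ T hT S hS]
    · exact StronglyMeasurable.aestronglyMeasurable
        (Measurable.stronglyMeasurable
          (((κ.measurable_coe hS).comp (Measurable.of_comap_le le_rfl)).ennreal_toReal))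
  -- Step L3 : two-point conditional law
  have hL3 : ∀ T : Set ({i : Fin d // i ∈ Aᶜ} → ℝ), MeasurableSet T → ∀ S₁ : Set ℝ, MeasurableSet S₁ →
      ∀ S₂ : Set ℝ, MeasurableSet S₂ →
      μ (Z ⁻¹' T ∩ ((fun ω => f (X ω)) ⁻¹' S₁ ∩ (fun ω => f (X' ω)) ⁻¹' S₂))
        = ∫⁻ x in T, κ x S₁ * κ x S₂ ∂ν := by
    intro T hT S₁ hS₁ S₂ hS₂
    set φ : (Fin d → ℝ) → ℝ := fun v => Set.indicator S₁ (fun _ => (1:ℝ)) (f v) with hφ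
    set φ' : (Fin d → ℝ) → ℝ := fun v => Set.indicator S₂ (fun _ => (1:ℝ)) (f v) with hφ'
    have hφm : Measurable φ := by
      have : φ = Set.indicator (f ⁻¹' S₁) (fun _ => (1:ℝ)) := by
        funext v; simp [hφ, Set.indicator_apply]
      rw [this]; exact measurable_const.indicator (hf hS₁)
    have hφ'm : Measurable φ' := by
      have : φ' = Set.indicator (f ⁻¹' S₂) (fun _ => (1:ℝ)) := by
        funext v; simp [hφ', Set.indicator_apply]
      rw [this]; exact measurable_const.indicator (hf hS₂)
    have hbd : ∀ v, |φ v| ≤ 1 := by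
      intro v; simp only [hφ, Set.indicator_apply]; split_ifs <;> simp
    have hbd' : ∀ v, |φ' v| ≤ 1 := by
      intro v; simp only [hφ', Set.indicator_apply]; split_ifs <;> simp
    have hprod := hiid φ φ' hφm hφ'm ⟨1, hbd⟩ ⟨1, hbd'⟩
    have hFrw : (fun ω => φ (X ω) * φ' (X' ω))
        = Set.indicator ((fun ω => f (X ω)) ⁻¹' S₁ ∩ (fun ω => f (X' ω)) ⁻¹' S₂)
            (fun _ => (1:ℝ)) := by
      funext ω
      simp only [hφ, hφ', Set.indicator_apply, Set.mem_inter_iff, Set.mem_preimage]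
      by_cases h1 : f (X ω) ∈ S₁ <;> by_cases h2 : f (X' ω) ∈ S₂ <;> simp [h1, h2]
    have hFint : Integrable (fun ω => φ (X ω) * φ' (X' ω)) μ := by
      rw [hFrw]
      exact (integrable_const (1:ℝ)).indicator ((hfX hS₁).inter (hfX' hS₂))
    have hsm : MeasurableSet[sigmaRestrict X A] (Z ⁻¹' T) := ⟨T, hT, rfl⟩
    -- set integral over Z⁻¹ T of the product
    have e1 : ∫ ω in Z ⁻¹' T, φ (X ω) * φ' (X' ω) ∂μ
        = (μ (Z ⁻¹' T ∩ ((fun ω => f (X ω)) ⁻¹' S₁ ∩ (fun ω => f (X' ω)) ⁻¹' S₂))).toReal := by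
      simp only [hFrw]
      rw [setIntegral_indicator ((hfX hS₁).inter (hfX' hS₂)), setIntegral_const,
        smul_eq_mul, mul_one, measureReal_def]
    have e2 : ∫ ω in Z ⁻¹' T, φ (X ω) * φ' (X' ω) ∂μ
        = ∫ ω in Z ⁻¹' T, (κ (Z ω) S₁).toReal * (κ (Z ω) S₂).toReal ∂μ := by
      rw [← setIntegral_condExp hσ hFint hsm]
      refine setIntegral_congr_ae (hσ _ hsm) ?_
      filter_upwards [hprod, hcond S₁ hS₁, hcond S₂ hS₂] with ω h1 h2 h3 _
      rw [h1, ← h2, ← h3]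
    have e3 : ∫ ω in Z ⁻¹' T, (κ (Z ω) S₁).toReal * (κ (Z ω) S₂).toReal ∂μ
        = (∫⁻ x in T, κ x S₁ * κ x S₂ ∂ν).toReal := by
      have hm12 : Measurable fun x => (κ x S₁).toReal * (κ x S₂).toReal :=
        (κ.measurable_coe hS₁).ennreal_toReal.mul (κ.measurable_coe hS₂).ennreal_toReal
      have e3a : ∫ ω in Z ⁻¹' T, (κ (Z ω) S₁).toReal * (κ (Z ω) S₂).toReal ∂μ
          = ∫ x in T, (κ x S₁).toReal * (κ x S₂).toReal ∂ν := by
        rw [hν, setIntegral_map hT hm12.aestronglyMeasurable hZ.aemeasurable]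
      rw [e3a]
      rw [show (fun x => (κ x S₁).toReal * (κ x S₂).toReal)
          = fun x => (κ x S₁ * κ x S₂).toReal from by
        funext x; rw [ENNReal.toReal_mul]]
      exact integral_toReal (((κ.measurable_coe hS₁).mul (κ.measurable_coe hS₂)).aemeasurable)
        (Filter.Eventually.of_forall fun x =>
          ENNReal.mul_lt_top (measure_lt_top _ _) (measure_lt_top _ _))
    have hfin2 : ∫⁻ x in T, κ x S₁ * κ x S₂ ∂ν ≠ ⊤ := by
      refine ne_top_of_le_ne_top (by simp : (1:ENNReal) ≠ ⊤) ?_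
      calc ∫⁻ x in T, κ x S₁ * κ x S₂ ∂ν ≤ ∫⁻ _ in T, 1 ∂ν := by
            refine lintegral_mono fun x => ?_
            exact mul_le_one' prob_le_one prob_le_one
        _ = ν T := by simp
        _ ≤ 1 := prob_le_one
    exact (ENNReal.toReal_eq_toReal_iff' (measure_ne_top _ _) hfin2).mp (e1.symm.trans (e2.trans e3))
  -- Step L4 : joint law of (Z, (f∘X, f∘X'))
  have htriplem : Measurable fun ω => (Z ω, (f (X ω), f (X' ω))) :=
    hZ.prodMk (hfX.prodMk hfX')
  haveI : IsProbabilityMeasure (μ.map fun ω => (Z ω, (f (X ω), f (X' ω)))) :=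
    Measure.isProbabilityMeasure_map htriplem.aemeasurable
  have hL4 : μ.map (fun ω => (Z ω, (f (X ω), f (X' ω)))) = ν.compProd (κ ×ₖ κ) := by
    have hCspan : IsCountablySpanning {s : Set ({i : Fin d // i ∈ Aᶜ} → ℝ) | MeasurableSet s} :=
      isCountablySpanning_measurableSet
    have hDspan : IsCountablySpanning
        (Set.image2 (· ×ˢ ·) {s : Set ℝ | MeasurableSet s} {t : Set ℝ | MeasurableSet t}) := by
      refine ⟨fun _ => Set.univ ×ˢ Set.univ, fun _ => ?_, by simp [Set.iUnion_const]⟩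
      refine Set.mem_image2_of_mem ?_ ?_ <;> simp
    have hgen : (inferInstance : MeasurableSpace (({i : Fin d // i ∈ Aᶜ} → ℝ) × ℝ × ℝ)) =
        MeasurableSpace.generateFrom (Set.image2 (· ×ˢ ·)
          {s : Set ({i : Fin d // i ∈ Aᶜ} → ℝ) | MeasurableSet s}
          (Set.image2 (· ×ˢ ·) {s : Set ℝ | MeasurableSet s} {t : Set ℝ | MeasurableSet t})) := by
      have hstep : (inferInstance : MeasurableSpace (({i : Fin d // i ∈ Aᶜ} → ℝ) × ℝ × ℝ))
          = @Prod.instMeasurableSpace _ _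
            (MeasurableSpace.generateFrom
              {s : Set ({i : Fin d // i ∈ Aᶜ} → ℝ) | MeasurableSet s})
            (MeasurableSpace.generateFrom (Set.image2 (· ×ˢ ·)
              {s : Set ℝ | MeasurableSet s} {t : Set ℝ | MeasurableSet t})) := by
        rw [MeasurableSpace.generateFrom_measurableSet, generateFrom_prod]
      exact hstep.trans (generateFrom_prod_eq hCspan hDspan)
    refine ext_of_generate_finite _ hgen
      (MeasurableSpace.isPiSystem_measurableSet.prod isPiSystem_prod) ?_ ?_
    · rintro _ ⟨T, hT, _, ⟨S₁, hS₁, S₂, hS₂, rfl⟩, rfl⟩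
      have hT' : MeasurableSet T := hT
      have hS₁' : MeasurableSet S₁ := hS₁
      have hS₂' : MeasurableSet S₂ := hS₂
      rw [Measure.map_apply htriplem (hT'.prod (hS₁'.prod hS₂')),
        Measure.compProd_apply_prod hT' (hS₁'.prod hS₂')]
      have hpre : (fun ω => (Z ω, (f (X ω), f (X' ω)))) ⁻¹' (T ×ˢ S₁ ×ˢ S₂)
          = Z ⁻¹' T ∩ ((fun ω => f (X ω)) ⁻¹' S₁ ∩ (fun ω => f (X' ω)) ⁻¹' S₂) := rfl
      rw [hpre, hL3 T hT' S₁ hS₁' S₂ hS₂']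
      refine setLIntegral_congr_fun hT' (fun x _ => ?_)
      rw [Kernel.prod_apply, Measure.prod_prod]
    · simp
  -- Step A
  have hA1 : ∫⁻ ω, ENNReal.ofReal (ψ (f (X ω)) (g (Z ω))) ∂μ
      = ∫⁻ x, ∫⁻ y, ENNReal.ofReal (ψ y (g x)) ∂(κ x) ∂ν := by
    have hFm : Measurable fun p : (({i : Fin d // i ∈ Aᶜ} → ℝ) × ℝ) =>
        ENNReal.ofReal (ψ p.2 (g p.1)) :=
      ENNReal.measurable_ofReal.comp
        (hψm.comp (measurable_snd.prodMk (hg.comp measurable_fst)))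
    have h1 : ∫⁻ ω, ENNReal.ofReal (ψ (f (X ω)) (g (Z ω))) ∂μ
        = ∫⁻ p, ENNReal.ofReal (ψ p.2 (g p.1)) ∂(μ.map fun ω => (Z ω, f (X ω))) :=
      (lintegral_map hFm hpairm).symm
    rw [h1, hL1, Measure.lintegral_compProd hFm]
  -- Step B
  have hB1 : ∫⁻ ω, ENNReal.ofReal (ψ (f (X ω)) (f (X' ω))) ∂μ
      = ∫⁻ x, ∫⁻ y', ∫⁻ y, ENNReal.ofReal (ψ y y') ∂(κ x) ∂(κ x) ∂ν := by
    have hGm : Measurable fun p : (({i : Fin d // i ∈ Aᶜ} → ℝ) × ℝ × ℝ) =>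
        ENNReal.ofReal (ψ p.2.1 p.2.2) :=
      ENNReal.measurable_ofReal.comp (hψm.comp measurable_snd)
    have h1 : ∫⁻ ω, ENNReal.ofReal (ψ (f (X ω)) (f (X' ω))) ∂μ
        = ∫⁻ p, ENNReal.ofReal (ψ p.2.1 p.2.2)
            ∂(μ.map fun ω => (Z ω, (f (X ω), f (X' ω)))) :=
      (lintegral_map hGm htriplem).symm
    rw [h1, hL4, Measure.lintegral_compProd hGm]
    refine lintegral_congr fun x => ?_
    rw [Kernel.prod_apply]
    exact lintegral_prod_symm _ (ENNReal.measurable_ofReal.comp hψm).aemeasurable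
  -- Core inequality
  have hcore : ∫⁻ x, ∫⁻ y, ENNReal.ofReal (ψ y (g x)) ∂(κ x) ∂ν
      ≤ ∫⁻ x, ∫⁻ y', ∫⁻ y, ENNReal.ofReal (ψ y y') ∂(κ x) ∂(κ x) ∂ν := by
    refine lintegral_mono_ae ?_
    filter_upwards [hmin, hint3] with x hx hxint
    have key : ∀ θ : ℝ, ∫⁻ y, ENNReal.ofReal (ψ y (g x)) ∂(κ x)
        ≤ ∫⁻ y, ENNReal.ofReal (ψ y θ) ∂(κ x) := by
      intro θ
      rw [← ofReal_integral_eq_lintegral_ofReal (hxint (g x))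
          (Filter.Eventually.of_forall fun y => hψ0 y (g x)),
        ← ofReal_integral_eq_lintegral_ofReal (hxint θ)
          (Filter.Eventually.of_forall fun y => hψ0 y θ)]
      exact ENNReal.ofReal_le_ofReal (hx θ)
    calc ∫⁻ y, ENNReal.ofReal (ψ y (g x)) ∂(κ x)
        = ∫⁻ _, (∫⁻ y, ENNReal.ofReal (ψ y (g x)) ∂(κ x)) ∂(κ x) := by
          rw [lintegral_const, measure_univ, mul_one]
      _ ≤ ∫⁻ y', ∫⁻ y, ENNReal.ofReal (ψ y y') ∂(κ x) ∂(κ x) :=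
          lintegral_mono fun y' => key y'
  -- Conclusion
  have hle : ∫⁻ ω, ENNReal.ofReal (ψ (f (X ω)) (g (Z ω))) ∂μ
      ≤ ∫⁻ ω, ENNReal.ofReal (ψ (f (X ω)) (f (X' ω))) ∂μ := by
    rw [hA1, hB1]; exact hcore
  have hfin : ∫⁻ ω, ENNReal.ofReal (ψ (f (X ω)) (f (X' ω))) ∂μ ≠ ⊤ :=
    ((hasFiniteIntegral_iff_ofReal
      (Filter.Eventually.of_forall fun ω => hψ0 _ _)).mp hint2.2).ne
  rw [integral_eq_lintegral_of_nonneg_ae (Filter.Eventually.of_forall fun ω => hψ0 _ _)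
      hint1.aestronglyMeasurable,
    integral_eq_lintegral_of_nonneg_ae (Filter.Eventually.of_forall fun ω => hψ0 _ _)
      hint2.aestronglyMeasurable]
  exact ENNReal.toReal_mono hfin hle
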